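/- With V, h, J_l as above, let e_P (for nonempty P ⊆ {1,…,r} with chosen p ∈ P) be the idempotent operator on ⊗_ℝ^r V built from the J_l. Then (⊗_ℝ^r V)·e_P = {x ∈ ⊗_ℝ^r V : x J_q = x J_p for all q ∈ P, and x J_q = -x J_p for all q ∉ P}. -/

import Mathlib

open scoped TensorProduct
open PiTensorProduct

variable (V : Type*) [AddCommGroup V] [Module ℂ V] [Module ℝ V] [IsScalarTower ℝ ℂ V]

/-- Multiplication by `i` on `V`, as an `ℝ`-linear map. -/
noncomputable def mulI : V →ₗ[ℝ] V :=
  (Complex.I • (LinearMap.id : V →ₗ[ℂ] V)).restrictScalars ℝ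

variable (r : ℕ)

/-- The operator `J_l` on `⨂[ℝ]^r V` applying multiplication by `i` in the `l`-th slot. -/
noncomputable def Jop (l : Fin r) : Module.End ℝ (⨂[ℝ] _ : Fin r, V) :=
  PiTensorProduct.map (fun i => if i = l then mulI V else LinearMap.id)

/-- The diagonal action of `g ∈ GL_ℂ(V)` on `⨂[ℝ]^r V`. -/
noncomputable def diag (g : V ≃ₗ[ℂ] V) : Module.End ℝ (⨂[ℝ] _ : Fin r, V) :=
  PiTensorProduct.map (fun _ => g.toLinearMap.restrictScalars ℝ)

lemma Jop_comm (l m : Fin r) : Commute (Jop V r l) (Jop V r m) := by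
  show _ * _ = _ * _
  rw [Module.End.mul_eq_comp, Module.End.mul_eq_comp]
  unfold Jop
  rw [← PiTensorProduct.map_comp, ← PiTensorProduct.map_comp]
  congr 1
  funext i
  split_ifs <;> simp

noncomputable def eP {A : Type*} [Ring A] [Algebra ℝ A] {r : ℕ} (J : Fin r → A)
    (hcomm : ∀ l m, Commute (J l) (J m)) (P : Finset (Fin r)) (p : Fin r) : A :=
  (((2 : ℝ) ^ (r - 1))⁻¹) •
    ((P.erase p).noncommProd (fun q => 1 - J p * J q) (by
        intro a _ b _ _
        have h : Commute (J p * J a) (J p * J b) :=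
          ((hcomm p p).mul_right (hcomm p b)).mul_left ((hcomm a p).mul_right (hcomm a b))
        exact (Commute.one_left (1 - J p * J b)).sub_left
          ((Commute.one_right (J p * J a)).sub_right h)) *
     (Pᶜ).noncommProd (fun q => 1 + J p * J q) (by
        intro a _ b _ _
        have h : Commute (J p * J a) (J p * J b) :=
          ((hcomm p p).mul_right (hcomm p b)).mul_left ((hcomm a p).mul_right (hcomm a b))
        exact (Commute.one_left (1 + J p * J b)).add_left
          ((Commute.one_right (J p * J a)).add_right h)))

lemma mulI_mulI {V : Type*} [AddCommGroup V] [Module ℂ V] [Module ℝ V] [IsScalarTower ℝ ℂ V]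
    (v : V) : mulI V (mulI V v) = -v := by
  simp only [mulI, LinearMap.restrictScalars_apply, LinearMap.smul_apply, LinearMap.id_apply,
    smul_smul, Complex.I_mul_I, neg_smul, one_smul]

lemma Jop_sq {V : Type*} [AddCommGroup V] [Module ℂ V] [Module ℝ V] [IsScalarTower ℝ ℂ V]
    (r : ℕ) (l : Fin r) : Jop V r l * Jop V r l = -1 := by
  apply PiTensorProduct.ext
  apply MultilinearMap.ext
  intro v
  simp only [LinearMap.compMultilinearMap_apply, Module.End.mul_apply, Jop,
    PiTensorProduct.map_tprod, LinearMap.neg_apply, Module.End.one_apply]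
  have h : (fun i => (if i = l then mulI V else LinearMap.id)
      ((fun i => (if i = l then mulI V else LinearMap.id) (v i)) i)) =
      Function.update v l (-(v l)) := by
    funext i
    by_cases h : i = l
    · subst h; simp [Function.update, mulI_mulI]
    · simp [h, Function.update]
  rw [h, MultilinearMap.map_update_neg, Function.update_eq_self]

section auxAlg

variable {A : Type*} [Ring A] [Algebra ℝ A] {r : ℕ}

lemma sub_factor (J : Fin r → A) (hcomm : ∀ l m, Commute (J l) (J m))
    (hsq : ∀ l, J l * J l = -1) (p q : Fin r) :
    (J q - J p) * (1 - J p * J q) = 0 := by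
  have h1 : J q * (J p * J q) = -(J p) := by
    rw [← mul_assoc, (hcomm q p).eq, mul_assoc, hsq, mul_neg_one]
  have h2 : J p * (J p * J q) = -(J q) := by
    rw [← mul_assoc, hsq, neg_one_mul]
  rw [sub_mul, mul_sub, mul_sub, mul_one, mul_one, h1, h2]
  abel

lemma add_factor (J : Fin r → A) (hcomm : ∀ l m, Commute (J l) (J m))
    (hsq : ∀ l, J l * J l = -1) (p q : Fin r) :
    (J q + J p) * (1 + J p * J q) = 0 := by
  have h1 : J q * (J p * J q) = -(J p) := by
    rw [← mul_assoc, (hcomm q p).eq, mul_assoc, hsq, mul_neg_one]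
  have h2 : J p * (J p * J q) = -(J q) := by
    rw [← mul_assoc, hsq, neg_one_mul]
  rw [add_mul, mul_add, mul_add, mul_one, mul_one, h1, h2]
  abel

lemma eP_sub (J : Fin r → A) (hcomm : ∀ l m, Commute (J l) (J m))
    (hsq : ∀ l, J l * J l = -1) {P : Finset (Fin r)} {p q : Fin r} (hq : q ∈ P.erase p) :
    (J q - J p) * eP J hcomm P p = 0 := by
  classical
  unfold eP
  rw [mul_smul_comm]
  erw [← Finset.mul_noncommProd_erase (P.erase p) hq (fun q => 1 - J p * J q) _]
  rw [← mul_assoc, ← mul_assoc, sub_factor J hcomm hsq p q, zero_mul, zero_mul, smul_zero]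

lemma eP_add (J : Fin r → A) (hcomm : ∀ l m, Commute (J l) (J m))
    (hsq : ∀ l, J l * J l = -1) {P : Finset (Fin r)} {p q : Fin r} (hq : q ∉ P) :
    (J q + J p) * eP J hcomm P p = 0 := by
  classical
  unfold eP
  rw [mul_smul_comm]
  have hc : ∀ c, Commute (J q + J p)
      ((P.erase p).noncommProd (fun a => 1 - J p * J a) c) := fun c =>
    Finset.noncommProd_commute _ _ _ _ (fun a _ =>
      (Commute.one_right (J q + J p)).sub_right
        (Commute.add_left ((hcomm q p).mul_right (hcomm q a))
          ((hcomm p p).mul_right (hcomm p a))))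
  erw [← Finset.mul_noncommProd_erase Pᶜ (Finset.mem_compl.mpr hq) (fun a => 1 + J p * J a) _]
  erw [(hc _).left_comm, ← mul_assoc (J q + J p), add_factor J hcomm hsq p q, zero_mul,
    mul_zero, smul_zero]

end auxAlg

lemma prod_double {M : Type*} [AddCommGroup M] [Module ℝ M] {r : ℕ}
    (f : Fin r → Module.End ℝ M) (x : M) :
    ∀ (s : Finset (Fin r)) (comm), (∀ q ∈ s, f q x = (2 : ℝ) • x) →
      s.noncommProd f comm x = ((2 : ℝ) ^ s.card) • x := by
  classical
  intro s
  induction s using Finset.induction_on with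
  | empty => intro _ _; simp
  | @insert a s ha ih =>
    intro comm hx
    rw [Finset.noncommProd_insert_of_notMem _ _ _ _ ha, Module.End.mul_apply,
      ih _ (fun q hq => hx q (Finset.mem_insert_of_mem hq)), map_smul,
      hx a (Finset.mem_insert_self a s), Finset.card_insert_of_notMem ha,
      smul_smul, pow_succ]

/-- `(⨂[ℝ]^r V)·e_P` is exactly the set of `x` with `x J_q = x J_p` for `q ∈ P`
and `x J_q = -x J_p` for `q ∉ P`. -/
theorem range_eP
    {V : Type*} [AddCommGroup V] [Module ℂ V] [Module ℝ V] [IsScalarTower ℝ ℂ V]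
    (r : ℕ) (P : Finset (Fin r)) (hP : P.Nonempty) (p : Fin r) (hp : p ∈ P)
    (x : ⨂[ℝ] _ : Fin r, V) :
    (∃ y, eP (Jop V r) (Jop_comm V r) P p y = x) ↔
      ((∀ q ∈ P, Jop V r q x = Jop V r p x) ∧
       (∀ q ∉ P, Jop V r q x = -(Jop V r p x))) := by
  classical
  have hpp : Jop V r p (Jop V r p x) = -x := by
    have := congrArg (fun f : Module.End ℝ (⨂[ℝ] _ : Fin r, V) => f x) (Jop_sq r p)
    simpa [Module.End.mul_apply] using this
  constructor
  · rintro ⟨y, rfl⟩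
    constructor
    · intro q hq
      by_cases hqp : q = p
      · subst hqp; rfl
      · have h0 := eP_sub (Jop V r) (Jop_comm V r) (fun l => Jop_sq r l)
          (Finset.mem_erase.mpr ⟨hqp, hq⟩)
        have h1 := congrArg (fun f : Module.End ℝ (⨂[ℝ] _ : Fin r, V) => f y) h0
        simp only [Module.End.mul_apply, LinearMap.sub_apply, LinearMap.zero_apply] at h1
        exact sub_eq_zero.mp h1
    · intro q hq
      have h0 := eP_add (Jop V r) (Jop_comm V r) (fun l => Jop_sq r l) (P := P) (p := p) hq
      have h1 := congrArg (fun f : Module.End ℝ (⨂[ℝ] _ : Fin r, V) => f y) h0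
      simp only [Module.End.mul_apply, LinearMap.add_apply, LinearMap.zero_apply] at h1
      exact eq_neg_of_add_eq_zero_left h1
  · rintro ⟨h1, h2⟩
    refine ⟨x, ?_⟩
    unfold eP
    have hC : ∀ q ∈ Pᶜ, (1 + Jop V r p * Jop V r q) x = (2 : ℝ) • x := by
      intro q hq
      have hx := h2 q (Finset.mem_compl.mp hq)
      rw [LinearMap.add_apply, Module.End.one_apply, Module.End.mul_apply, hx, map_neg, hpp,
        neg_neg, two_smul]
    have hE : ∀ q ∈ P.erase p, (1 - Jop V r p * Jop V r q) x = (2 : ℝ) • x := by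
      intro q hq
      have hx := h1 q (Finset.mem_of_mem_erase hq)
      rw [LinearMap.sub_apply, Module.End.one_apply, Module.End.mul_apply, hx, hpp, sub_neg_eq_add,
        two_smul]
    erw [LinearMap.smul_apply, Module.End.mul_apply, prod_double _ _ Pᶜ _ hC, map_smul,
      prod_double _ _ (P.erase p) _ hE, smul_smul, smul_smul]
    have hcards : Pᶜ.card + (P.erase p).card = r - 1 := by
      rw [Finset.card_compl, Finset.card_erase_of_mem hp, Fintype.card_fin]
      have hc1 : 1 ≤ P.card := Finset.card_pos.mpr hP
      have hc2 : P.card ≤ r := by simpa using Finset.card_le_univ P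
      omega
    rw [mul_assoc, ← pow_add, hcards, inv_mul_cancel₀ (by positivity), one_smul]
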